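/- arXiv:2003.11298 — 3 statements merged into one kernel-verified Lean document; each statement's English description precedes it below -/
import Mathlib

section
/- Every signed fibration π: (Γ, α̃_Γ) → (B, α̃_B) of signed GKM graphs gives rise to a fiberwise signed fibration of the underlying unsigned GKM graphs (with fiber lift the restriction of α̃_Γ to the vertical edges). Conversely, if (π, α̃) is a fiberwise signed fibration of GKM graphs π: (Γ,α) → (B,α_B), then every signed structure α̃_B compatible with the base GKM graph (B,α_B) gives rise to a unique signed structure α̃_Γ on Γ which extends α̃ on the vertical edges and makes π: (Γ,α̃_Γ) → (B,α̃_B) a signed fibration. -/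
open Classical

namespace GKMPaper

/-- `ℤ^m`, the weight lattice. -/
abbrev Zm (m : ℕ) := Fin m → ℤ

/-- The relation identifying a vector with its negative. -/
def pmRel (m : ℕ) (a b : Zm m) : Prop := a = b ∨ a = -b

theorem pmRel_equiv (m : ℕ) : Equivalence (pmRel m) := by
  constructor
  · intro a; exact Or.inl rfl
  · intro a b hab
    rcases hab with hh | hh
    · exact Or.inl hh.symm
    · exact Or.inr (by rw [hh, neg_neg])
  · intro a b c h1 h2
    rcases h1 with h1 | h1 <;> rcases h2 with h2 | h2
    · exact Or.inl (h1.trans h2)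
    · exact Or.inr (h1.trans h2)
    · exact Or.inr (by rw [h1, h2])
    · exact Or.inl (by rw [h1, h2, neg_neg])

def pmSetoid (m : ℕ) : Setoid (Zm m) := ⟨pmRel m, pmRel_equiv m⟩

/-- `ℤ^m / ±1`. -/
def ZmPM (m : ℕ) := Quotient (pmSetoid m)

/-- The projection `ℤ^m → ℤ^m/±1`. -/
def pm {m : ℕ} (a : Zm m) : ZmPM m := Quotient.mk (pmSetoid m) a

/-- Linear independence over `ℤ`. -/
def Indep {m : ℕ} (a b : Zm m) : Prop :=
  ∀ c d : ℤ, c • a + d • b = 0 → c = 0 ∧ d = 0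

/-- An abstract graph with finite vertex and edge sets, each edge occurring with
both orientations, and no loops. -/
structure OrGraph : Type 1 where
  V : Type
  E : Type
  fV : Fintype V
  fE : Fintype E
  dV : DecidableEq V
  dE : DecidableEq E
  src : E → V
  dst : E → V
  rev : E → E
  rev_rev : ∀ e, rev (rev e) = e
  rev_ne : ∀ e, rev e ≠ e
  src_rev : ∀ e, src (rev e) = dst e
  no_loop : ∀ e, src e ≠ dst e

attribute [instance] OrGraph.fV OrGraph.fE OrGraph.dV OrGraph.dE

/-- A connection on a graph. -/
structure Connection (G : OrGraph) where
  t : G.E → G.E → G.E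
  src_t : ∀ e f, G.src f = G.src e → G.src (t e f) = G.dst e
  t_self : ∀ e, t e e = G.rev e
  t_inv : ∀ e f, G.src f = G.src e → t (G.rev e) (t e f) = f

/-- `k`-valence. -/
def OrGraph.Regular (G : OrGraph) (k : ℕ) : Prop :=
  ∀ v : G.V, Fintype.card {e : G.E // G.src e = v} = k

def OrGraph.Adj (G : OrGraph) (v w : G.V) : Prop :=
  ∃ e, G.src e = v ∧ G.dst e = w

def OrGraph.IsConn (G : OrGraph) : Prop :=
  ∀ v w : G.V, Relation.ReflTransGen G.Adj v w

/-- Compatibility of a connection with an unsigned axial function. -/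
def UnsignedCompat {m : ℕ} (G : OrGraph) (α : G.E → ZmPM m) (C : Connection G) : Prop :=
  (∀ e f : G.E, G.src f = G.src e → e ≠ f →
      ∀ a b : Zm m, pm a = α e → pm b = α f → Indep a b) ∧
  (∀ e f : G.E, G.src f = G.src e →
      ∃ (a g : Zm m) (c : ℤ), pm a = α f ∧ pm g = α e ∧ α (C.t e f) = pm (a + c • g)) ∧
  (∀ e : G.E, α (G.rev e) = α e)

/-- `(G, α)` is an (unsigned) abstract GKM graph of valence `k` with labels in `ℤ^m/±1`. -/
def IsGKM {m : ℕ} (G : OrGraph) (k : ℕ) (α : G.E → ZmPM m) : Prop :=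
  G.Regular k ∧ G.IsConn ∧ ∃ C : Connection G, UnsignedCompat G α C

/-- Compatibility of a connection with a signed axial function. -/
def SignedCompat {m : ℕ} (G : OrGraph) (α : G.E → Zm m) (C : Connection G) : Prop :=
  (∀ e f : G.E, G.src f = G.src e → e ≠ f → Indep (α e) (α f)) ∧
  (∀ e f : G.E, G.src f = G.src e → ∃ c : ℤ, α (C.t e f) = α f + c • α e) ∧
  (∀ e : G.E, α (G.rev e) = - α e)

/-- `(G, α)` is a signed abstract GKM graph of valence `k` with labels in `ℤ^m`. -/
def IsSignedGKM {m : ℕ} (G : OrGraph) (k : ℕ) (α : G.E → Zm m) : Prop :=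
  G.Regular k ∧ G.IsConn ∧ ∃ C : Connection G, SignedCompat G α C

/-- Effectivity of an unsigned GKM graph: at every vertex, the labels of the
outgoing edges lift to a generating set of `ℤ^m`. -/
def Effective {m : ℕ} (G : OrGraph) (α : G.E → ZmPM m) : Prop :=
  ∀ v : G.V, ∃ lift : {e : G.E // G.src e = v} → Zm m,
    (∀ e, pm (lift e) = α e.1) ∧ Submodule.span ℤ (Set.range lift) = ⊤

def SignedEffective {m : ℕ} (G : OrGraph) (α : G.E → Zm m) : Prop :=
  ∀ v : G.V,
    Submodule.span ℤ (Set.range (fun e : {e : G.E // G.src e = v} => α e.1)) = ⊤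

/-- A graph fibration: a morphism sending vertices to vertices and horizontal
edges to edges, bijectively from the horizontal edges at `p` to the edges at `π(p)`. -/
structure GraphFib (G B : OrGraph) where
  onV : G.V → B.V
  onE : G.E → B.E
  src_onE : ∀ e, onV (G.src e) ≠ onV (G.dst e) → B.src (onE e) = onV (G.src e)
  dst_onE : ∀ e, onV (G.src e) ≠ onV (G.dst e) → B.dst (onE e) = onV (G.dst e)
  rev_onE : ∀ e, onV (G.src e) ≠ onV (G.dst e) → onE (G.rev e) = B.rev (onE e)

def GraphFib.Vertical {G B : OrGraph} (π : GraphFib G B) (e : G.E) : Prop :=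
  π.onV (G.src e) = π.onV (G.dst e)

def GraphFib.IsFib {G B : OrGraph} (π : GraphFib G B) : Prop :=
  ∀ p : G.V, Function.Bijective
    (fun e : {e : G.E // G.src e = p ∧ ¬ π.Vertical e} =>
      (⟨π.onE e.1, by rw [π.src_onE e.1 e.2.2, e.2.1]⟩ : {f : B.E // B.src f = π.onV p}))

/-- The extra conditions for a (unsigned) GKM fibration, w.r.t. connections `C`, `CB`. -/
def GKMFibCompat {m : ℕ} {G B : OrGraph} (αΓ : G.E → ZmPM m) (αB : B.E → ZmPM m)
    (π : GraphFib G B) (C : Connection G) (CB : Connection B) : Prop :=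
  (∀ e, ¬ π.Vertical e → αΓ e = αB (π.onE e)) ∧
  (∀ e f, G.src f = G.src e → π.Vertical f → π.Vertical (C.t e f)) ∧
  (∀ e f, G.src f = G.src e → ¬ π.Vertical e → ¬ π.Vertical f →
      ¬ π.Vertical (C.t e f) ∧ π.onE (C.t e f) = CB.t (π.onE e) (π.onE f))

/-- `π` is a GKM fibration of unsigned GKM graphs. -/
def IsGKMFib {m : ℕ} {G B : OrGraph} (αΓ : G.E → ZmPM m) (αB : B.E → ZmPM m)
    (π : GraphFib G B) : Prop :=
  π.IsFib ∧ ∃ (C : Connection G) (CB : Connection B),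
    UnsignedCompat G αΓ C ∧ UnsignedCompat B αB CB ∧ GKMFibCompat αΓ αB π C CB

def SignedGKMFibCompat {m : ℕ} {G B : OrGraph} (sΓ : G.E → Zm m) (sB : B.E → Zm m)
    (π : GraphFib G B) (C : Connection G) (CB : Connection B) : Prop :=
  (∀ e, ¬ π.Vertical e → sΓ e = sB (π.onE e)) ∧
  (∀ e f, G.src f = G.src e → π.Vertical f → π.Vertical (C.t e f)) ∧
  (∀ e f, G.src f = G.src e → ¬ π.Vertical e → ¬ π.Vertical f →
      ¬ π.Vertical (C.t e f) ∧ π.onE (C.t e f) = CB.t (π.onE e) (π.onE f))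

/-- `π` is a signed GKM fibration of signed GKM graphs. -/
def IsSignedGKMFib {m : ℕ} {G B : OrGraph} (sΓ : G.E → Zm m) (sB : B.E → Zm m)
    (π : GraphFib G B) : Prop :=
  π.IsFib ∧ ∃ (C : Connection G) (CB : Connection B),
    SignedCompat G sΓ C ∧ SignedCompat B sB CB ∧ SignedGKMFibCompat sΓ sB π C CB

/-- `(π, ft)` is a fiberwise signed fibration: `ft` is a lift of `αΓ` on the
vertical edges, satisfying the congruence condition w.r.t. suitable connections. -/
def IsFiberwiseSigned {m : ℕ} {G B : OrGraph} (αΓ : G.E → ZmPM m) (αB : B.E → ZmPM m)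
    (π : GraphFib G B) (ft : G.E → Zm m) : Prop :=
  π.IsFib ∧
  (∀ e, π.Vertical e → pm (ft e) = αΓ e) ∧
  (∀ e, π.Vertical e → ft (G.rev e) = - ft e) ∧
  ∃ (C : Connection G) (CB : Connection B),
    UnsignedCompat G αΓ C ∧ UnsignedCompat B αB CB ∧ GKMFibCompat αΓ αB π C CB ∧
    ∀ e f, G.src f = G.src e → π.Vertical f →
      ∃ (g : Zm m) (c : ℤ), pm g = αΓ e ∧ ft (C.t e f) = ft f + c • g

/-- Isomorphism of unsigned GKM graphs. -/
structure GKMIso {m : ℕ} (G : OrGraph) (α : G.E → ZmPM m)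
    (G' : OrGraph) (α' : G'.E → ZmPM m) : Type where
  fV : G.V ≃ G'.V
  fE : G.E ≃ G'.E
  φ : Zm m ≃ₗ[ℤ] Zm m
  src_comm : ∀ e, G'.src (fE e) = fV (G.src e)
  dst_comm : ∀ e, G'.dst (fE e) = fV (G.dst e)
  rev_comm : ∀ e, fE (G.rev e) = G'.rev (fE e)
  lab : ∀ (e : G.E) (a : Zm m), pm a = α e → α' (fE e) = pm (φ a)

/-- Isomorphism of signed GKM graphs. -/
structure SignedGKMIso {m : ℕ} (G : OrGraph) (α : G.E → Zm m)
    (G' : OrGraph) (α' : G'.E → Zm m) : Type where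
  fV : G.V ≃ G'.V
  fE : G.E ≃ G'.E
  φ : Zm m ≃ₗ[ℤ] Zm m
  src_comm : ∀ e, G'.src (fE e) = fV (G.src e)
  dst_comm : ∀ e, G'.dst (fE e) = fV (G.dst e)
  rev_comm : ∀ e, fE (G.rev e) = G'.rev (fE e)
  lab : ∀ e, α' (fE e) = φ (α e)

/-- Equivalence of fiberwise signed fibrations over the same base (identity on `ℤ^m`). -/
structure FSFEquiv {m : ℕ} {G B G' : OrGraph}
    (αΓ : G.E → ZmPM m) (π : GraphFib G B) (ft : G.E → Zm m)
    (αΓ' : G'.E → ZmPM m) (π' : GraphFib G' B) (ft' : G'.E → Zm m) : Type where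
  fV : G.V ≃ G'.V
  fE : G.E ≃ G'.E
  src_comm : ∀ e, G'.src (fE e) = fV (G.src e)
  dst_comm : ∀ e, G'.dst (fE e) = fV (G.dst e)
  rev_comm : ∀ e, fE (G.rev e) = G'.rev (fE e)
  lab : ∀ e, αΓ' (fE e) = αΓ e
  baseV : ∀ p, π'.onV (fV p) = π.onV p
  baseE : ∀ e, ¬ π.Vertical e → π'.onE (fE e) = π.onE e
  fiblab : ∀ e, π.Vertical e → ft' (fE e) = ft e

/-- Equivalence of signed GKM fibrations over the same base (identity on `ℤ^m`). -/
structure SFEquiv {m : ℕ} {G B G' : OrGraph}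
    (sΓ : G.E → Zm m) (π : GraphFib G B)
    (sΓ' : G'.E → Zm m) (π' : GraphFib G' B) : Type where
  fV : G.V ≃ G'.V
  fE : G.E ≃ G'.E
  src_comm : ∀ e, G'.src (fE e) = fV (G.src e)
  dst_comm : ∀ e, G'.dst (fE e) = fV (G.dst e)
  rev_comm : ∀ e, fE (G.rev e) = G'.rev (fE e)
  lab : ∀ e, sΓ' (fE e) = sΓ e
  baseV : ∀ p, π'.onV (fV p) = π.onV p
  baseE : ∀ e, ¬ π.Vertical e → π'.onE (fE e) = π.onE e

/-- Realizing `ℤ²` inside `ℝ² = ℂ`. -/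
noncomputable def toC (a : Zm 2) : ℂ := (a 0 : ℝ) + (a 1 : ℝ) * Complex.I

def cross (a b : ℂ) : ℝ := a.re * b.im - a.im * b.re

/-- A vertex of a signed GKM graph with labels in `ℤ²` is interior if the cone
spanned by the labels of the edges emanating from it is all of `ℝ²`. -/
def InteriorVtx (G : OrGraph) (α : G.E → Zm 2) (p : G.V) : Prop :=
  ∀ x : ℂ, ∃ c : G.E → ℝ, (∀ e, 0 ≤ c e) ∧
    x = ∑ e ∈ Finset.univ.filter (fun e : G.E => G.src e = p), c e • toC (α e)

/-- The angle from `w` to `w'`, represented in `[0, 2π)` if `ε = true`,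
and in `(-2π, 0]` if `ε = false`. -/
noncomputable def angTo (ε : Bool) (w w' : ℂ) : ℝ :=
  if ε then (if (w' / w).arg < 0 then (w' / w).arg + 2 * Real.pi else (w' / w).arg)
  else (if 0 < (w' / w).arg then (w' / w).arg - 2 * Real.pi else (w' / w).arg)

/-- The winding number of a cyclic sequence of vectors w.r.t. the orientation `ε`. -/
noncomputable def winding {nn : ℕ} [NeZero nn] (w : ZMod nn → ℂ) (ε : Bool) : ℝ :=
  (1 / (2 * Real.pi)) * ∑ i : ZMod nn, |angTo ε (w i) (w (i + 1))|

def LocallyConvex {nn : ℕ} (w : ZMod nn → ℂ) : Prop :=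
  (∀ i, angTo true (w i) (w (i + 1)) ∈ Set.Ioo 0 Real.pi) ∨
  (∀ i, angTo false (w i) (w (i + 1)) ∈ Set.Ioo (-Real.pi) 0)

/-- `ε` is the preferred orientation of the locally convex sequence `w`. -/
def Preferred {nn : ℕ} (w : ZMod nn → ℂ) (ε : Bool) : Prop :=
  (ε = true ∧ ∀ i, angTo true (w i) (w (i + 1)) ∈ Set.Ioo 0 Real.pi) ∨
  (ε = false ∧ ∀ i, angTo false (w i) (w (i + 1)) ∈ Set.Ioo (-Real.pi) 0)

/-- `P` lists the vertices of a strictly convex polygon in cyclic order. -/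
def ConvexCyclic {nn : ℕ} (P : ZMod nn → ℂ) : Prop :=
  (∀ i j, j ≠ i → j ≠ i + 1 → 0 < cross (P (i + 1) - P i) (P j - P i)) ∨
  (∀ i j, j ≠ i → j ≠ i + 1 → cross (P (i + 1) - P i) (P j - P i) < 0)

def SubAdj (G : OrGraph) (S : Set G.E) (v w : G.V) : Prop :=
  ∃ e ∈ S, G.src e = v ∧ G.dst e = w

/-- `S` is (the edge set of) a connected `2`-valent signed GKM subgraph of `(G, α)`. -/
def IsSigned2ValentSub (G : OrGraph) (α : G.E → Zm 2) (S : Set G.E) : Prop :=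
  S.Nonempty ∧
  (∀ e ∈ S, G.rev e ∈ S) ∧
  (∀ v : G.V, (∃ e ∈ S, G.src e = v) → Nat.card {e : G.E // e ∈ S ∧ G.src e = v} = 2) ∧
  (∀ v w : G.V, (∃ e ∈ S, G.src e = v) → (∃ e ∈ S, G.src e = w) →
      Relation.ReflTransGen (SubAdj G S) v w) ∧
  ∃ T : G.E → G.E → G.E,
    (∀ e f, e ∈ S → f ∈ S → G.src f = G.src e → T e f ∈ S ∧ G.src (T e f) = G.dst e) ∧
    (∀ e, e ∈ S → T e e = G.rev e) ∧
    (∀ e f, e ∈ S → f ∈ S → G.src f = G.src e → T (G.rev e) (T e f) = f) ∧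
    (∀ e f, e ∈ S → f ∈ S → G.src f = G.src e → ∃ c : ℤ, α (T e f) = α f + c • α e)

/-- A `2`-valent signed GKM subgraph of polytope type: it is a cycle realized by the
boundary edges of a simple convex `2`-polytope, with labels representing the slopes. -/
def IsPolytopeTypeSub (G : OrGraph) (α : G.E → Zm 2) (S : Set G.E) : Prop :=
  IsSigned2ValentSub G α S ∧
  ∃ np : ℕ, 3 ≤ np ∧
    ∃ (cyc : ZMod np → G.E) (P : ZMod np → ℂ) (t : ZMod np → ℝ),
      (∀ i, cyc i ∈ S) ∧
      (∀ ed ∈ S, ∃ i, ed = cyc i ∨ ed = G.rev (cyc i)) ∧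
      (∀ i, G.dst (cyc i) = G.src (cyc (i + 1))) ∧
      ConvexCyclic P ∧
      (∀ i, 0 < t i) ∧
      (∀ i, P (i + 1) - P i = t i • toC (α (cyc i)))

/-- A fibration over an `n`-gon base is of product type if the lifts of a path
once around the base are closed. -/
def ProductType {G B : OrGraph} (π : GraphFib G B) {nn : ℕ} (eB : ZMod nn → B.E) : Prop :=
  ∃ l : ZMod nn → G.E,
    ∀ i, ¬ π.Vertical (l i) ∧ π.onE (l i) = eB i ∧ G.dst (l i) = G.src (l (i + 1))

/-- `ℤ`-indexed `n`-gon data for a `2`-valent base graph. -/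
structure ZGonData (B : OrGraph) (n : ℕ) where
  v : ℤ → B.V
  eB : ℤ → B.E
  v_per : ∀ i, v (i + n) = v i
  e_per : ∀ i, eB (i + n) = eB i
  src_e : ∀ i, B.src (eB i) = v i
  dst_e : ∀ i, B.dst (eB i) = v (i + 1)
  v_inj : ∀ i j : ℤ, 0 ≤ i → i < n → 0 ≤ j → j < n → v i = v j → i = j
  v_surj : ∀ w : B.V, ∃ i : ℤ, v i = w
  e_cover : ∀ ed : B.E, ∃ i : ℤ, ed = eB i ∨ ed = B.rev (eB i)

/-- A choice of sign representatives `γ_i` of the base labels with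
`γ_i ≡ -γ_{i+2} (mod γ_{i+1})` for all `i ∈ ℤ`. -/
structure GammaData {B : OrGraph} {n : ℕ} (αB : B.E → ZmPM 2) (D : ZGonData B n) where
  γ : ℤ → Zm 2
  lift : ∀ i, pm (γ i) = αB (D.eB i)
  cong : ∀ i, ∃ c : ℤ, γ i + γ (i + 2) = c • γ (i + 1)

/-- A fiberwise signed `3`-valent GKM fibration over `(B, αB)`. -/
structure FSFOver (B : OrGraph) (αB : B.E → ZmPM 2) : Type 1 where
  G : OrGraph
  αΓ : G.E → ZmPM 2
  hΓ : IsGKM G 3 αΓ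
  π : GraphFib G B
  ft : G.E → Zm 2
  isfs : IsFiberwiseSigned αΓ αB π ft

def FSFOver.Equiv {B : OrGraph} {αB : B.E → ZmPM 2} (F F' : FSFOver B αB) : Prop :=
  Nonempty (FSFEquiv F.αΓ F.π F.ft F'.αΓ F'.π F'.ft)

/-- A signed `3`-valent GKM fibration over the signed graph `(B, sB)`. -/
structure SFOver (B : OrGraph) (sB : B.E → Zm 2) : Type 1 where
  G : OrGraph
  sΓ : G.E → Zm 2
  hΓ : IsSignedGKM G 3 sΓ
  π : GraphFib G B
  issf : IsSignedGKMFib sΓ sB π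

def SFOver.Equiv {B : OrGraph} {sB : B.E → Zm 2} (F F' : SFOver B sB) : Prop :=
  Nonempty (SFEquiv F.sΓ F.π F'.sΓ F'.π)

/-- The fibration `F` realizes the classification datum `([k], η)` w.r.t. the fixed data. -/
def RealizesFS {B : OrGraph} {αB : B.E → ZmPM 2} {n : ℕ} (D : ZGonData B n)
    (Γd : GammaData αB D) (F : FSFOver B αB) (k : ZMod n → ℤ) (η : Bool) : Prop :=
  (η = false ↔ ProductType F.π (fun i : ZMod n => D.eB i.val)) ∧
  ∃ (gE : ℤ → F.G.E) (αf : ℤ → Zm 2) (kk : ℤ → ℤ),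
    (∀ i, F.π.Vertical (gE i)) ∧
    (∀ i, F.π.onV (F.G.src (gE i)) = D.v i) ∧
    (∀ i, gE (i + n) = gE i ∨ gE (i + n) = F.G.rev (gE i)) ∧
    (∀ i, pm (αf i) = F.αΓ (gE i)) ∧
    (∀ i, ∃ c : ℤ, αf (i + 1) = αf i + c • Γd.γ i) ∧
    (∀ i, αf i = kk i • Γd.γ (i - 1) - kk (i - 1) • Γd.γ i) ∧
    (∀ i, kk i ≠ 0) ∧
    (∀ i : ZMod n, k i = kk i.val)

/-- The signed fibration `F` realizes the classification datum `([k], η)`. -/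
def RealizesS {B : OrGraph} (sB : B.E → Zm 2) {αB : B.E → ZmPM 2} {n : ℕ}
    (D : ZGonData B n) (Γd : GammaData αB D) (F : SFOver B sB)
    (k : ZMod n → ℤ) (η : Bool) : Prop :=
  (η = false ↔ ProductType F.π (fun i : ZMod n => D.eB i.val)) ∧
  ∃ (gE : ℤ → F.G.E) (αf : ℤ → Zm 2) (kk : ℤ → ℤ),
    (∀ i, F.π.Vertical (gE i)) ∧
    (∀ i, F.π.onV (F.G.src (gE i)) = D.v i) ∧
    (∀ i, gE (i + n) = gE i ∨ gE (i + n) = F.G.rev (gE i)) ∧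
    (∀ i, pm (αf i) = pm (F.sΓ (gE i))) ∧
    (∀ i, ∃ c : ℤ, αf (i + 1) = αf i + c • Γd.γ i) ∧
    (∀ i, αf i = kk i • Γd.γ (i - 1) - kk (i - 1) • Γd.γ i) ∧
    (∀ i, kk i ≠ 0) ∧
    (∀ i : ZMod n, k i = kk i.val)

def KRel (n : ℕ) (a b : {k : ZMod n → ℤ // ∀ i, k i ≠ 0}) : Prop :=
  a.1 = b.1 ∨ a.1 = - b.1

/-- `((ℤ∖{0})^n)/±1`. -/
def KClass (n : ℕ) := Quot (KRel n)

/-- The Section 7 setting: a signed GKM fibration of twisted type of a `3`-valent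
signed GKM graph `Γ` over `B`, the boundary of a 2-dimensional Delzant polytope with
`n` vertices, with `Γ` having `n-1` interior vertices; with the basic edges `f i`, `h i`
over `e i` and the fiber edges `g i`. -/
structure Section7 : Type 1 where
  n : ℕ
  hn : 3 ≤ n
  G : OrGraph
  B : OrGraph
  aG : G.E → Zm 2
  aB : B.E → Zm 2
  hG : IsSignedGKM G 3 aG
  hB : IsSignedGKM B 2 aB
  π : GraphFib G B
  hfib : IsSignedGKMFib aG aB π
  v : ZMod n → B.V
  e : ZMod n → B.E
  v_bij : Function.Bijective v
  src_e : ∀ i, B.src (e i) = v i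
  dst_e : ∀ i, B.dst (e i) = v (i + 1)
  e_cover : ∀ ed : B.E, ∃ i, ed = e i ∨ ed = B.rev (e i)
  P : ZMod n → ℂ
  tl : ZMod n → ℝ
  tl_pos : ∀ i, 0 < tl i
  polygon : ConvexCyclic P
  slope : ∀ i, P (i + 1) - P i = tl i • toC (aB (e i))
  delzant : ∀ i, (aB (e (i - 1)) 0) * (aB (e i) 1) - (aB (e (i - 1)) 1) * (aB (e i) 0) = 1 ∨
                 (aB (e (i - 1)) 0) * (aB (e i) 1) - (aB (e (i - 1)) 1) * (aB (e i) 0) = -1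
  f : ZMod n → G.E
  h : ZMod n → G.E
  g : ZMod n → G.E
  f_horiz : ∀ i, ¬ π.Vertical (f i)
  h_horiz : ∀ i, ¬ π.Vertical (h i)
  f_over : ∀ i, π.onE (f i) = e i
  h_over : ∀ i, π.onE (h i) = e i
  f_ne_h : ∀ i, f i ≠ h i
  g_vert : ∀ i, π.Vertical (g i)
  g_src : ∀ i, G.src (g i) = G.src (f i)
  g_dst : ∀ i, G.dst (g i) = G.src (h i)
  chain_f : ∀ i : ZMod n, i + 1 ≠ 0 → G.dst (f i) = G.src (f (i + 1))
  chain_h : ∀ i : ZMod n, i + 1 ≠ 0 → G.dst (h i) = G.src (h (i + 1))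
  twist_f : G.dst (f (-1)) = G.src (h 0)
  twist_h : G.dst (h (-1)) = G.src (f 0)
  k : ZMod n → ℤ
  k_ne : ∀ i, k i ≠ 0
  fiberweight : ∀ i, aG (g i) =
    k i • aB (e (i - 1)) - (if i = 0 then - k (i - 1) else k (i - 1)) • aB (e i)
  interior_count : Nat.card {p : G.V // InteriorVtx G aG p} = n - 1

/-- The type II signed structure: the signs of the labels of every second pair
of basic edges are reversed. -/
noncomputable def Section7.alphaII (S : Section7) : S.G.E → Zm 2 :=
  fun ed =>
    if ∃ i : ZMod S.n, Odd i.val ∧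
        (ed = S.f i ∨ ed = S.h i ∨ ed = S.G.rev (S.f i) ∨ ed = S.G.rev (S.h i))
    then - S.aG ed else S.aG ed


/-! ### Auxiliary lemmas for statement 0 -/

lemma pm_neg {m : ℕ} (a : Zm m) : pm (-a) = pm a :=
  Quotient.sound (Or.inr rfl)

lemma pm_eq_iff {m : ℕ} {a b : Zm m} : pm a = pm b ↔ (a = b ∨ a = -b) :=
  ⟨fun h => Quotient.exact h, fun h => Quotient.sound h⟩

lemma Indep.negLeft {m : ℕ} {a b : Zm m} (h : Indep a b) : Indep (-a) b := by
  intro c d hcd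
  have hcd' : (-c) • a + d • b = 0 := by
    rw [neg_smul, ← smul_neg]; exact hcd
  obtain ⟨h1, h2⟩ := h (-c) d hcd'
  exact ⟨neg_eq_zero.mp h1, h2⟩

lemma Indep.negRight {m : ℕ} {a b : Zm m} (h : Indep a b) : Indep a (-b) := by
  intro c d hcd
  have hcd' : c • a + (-d) • b = 0 := by
    rw [neg_smul, ← smul_neg]; exact hcd
  obtain ⟨h1, h2⟩ := h c (-d) hcd'
  exact ⟨h1, neg_eq_zero.mp h2⟩

lemma indep_transfer {m : ℕ} {a a' b b' : Zm m}
    (ha : a' = a ∨ a' = -a) (hb : b' = b ∨ b' = -b) (h : Indep a b) : Indep a' b' := by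
  rcases ha with ha | ha <;> rcases hb with hb | hb <;> rw [ha, hb]
  · exact h
  · exact h.negRight
  · exact h.negLeft
  · exact h.negLeft.negRight

lemma OrGraph.dst_rev (G : OrGraph) (e : G.E) : G.dst (G.rev e) = G.src e := by
  have h := G.src_rev (G.rev e)
  rw [G.rev_rev] at h
  exact h.symm

lemma vertical_rev_iff {G B : OrGraph} (π : GraphFib G B) (e : G.E) :
    π.Vertical (G.rev e) ↔ π.Vertical e := by
  unfold GraphFib.Vertical
  rw [G.src_rev, G.dst_rev]
  exact eq_comm

lemma unsigned_of_signed {m : ℕ} {G : OrGraph} {s : G.E → Zm m} {C : Connection G}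
    (h : SignedCompat G s C) : UnsignedCompat G (fun e => pm (s e)) C := by
  obtain ⟨h1, h2, h3⟩ := h
  refine ⟨?_, ?_, ?_⟩
  · intro e f hsrc hne a b ha hb
    exact indep_transfer (pm_eq_iff.mp ha) (pm_eq_iff.mp hb) (h1 e f hsrc hne)
  · intro e f hsrc
    obtain ⟨c, hc⟩ := h2 e f hsrc
    exact ⟨s f, s e, c, rfl, rfl, by show pm (s (C.t e f)) = _; rw [hc]⟩
  · intro e
    simp only [h3 e, pm_neg]

/-- The (unique) horizontal lift of a base edge at a vertex of the total graph. -/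
noncomputable def liftE {G B : OrGraph} (π : GraphFib G B) (hfib : π.IsFib)
    (q : G.V) (b : B.E) (hb : B.src b = π.onV q) : G.E :=
  ((Equiv.ofBijective _ (hfib q)).symm ⟨b, hb⟩).1

lemma liftE_src {G B : OrGraph} (π : GraphFib G B) (hfib : π.IsFib)
    (q : G.V) (b : B.E) (hb : B.src b = π.onV q) :
    G.src (liftE π hfib q b hb) = q :=
  ((Equiv.ofBijective _ (hfib q)).symm ⟨b, hb⟩).2.1

lemma liftE_nvert {G B : OrGraph} (π : GraphFib G B) (hfib : π.IsFib)
    (q : G.V) (b : B.E) (hb : B.src b = π.onV q) :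
    ¬ π.Vertical (liftE π hfib q b hb) :=
  ((Equiv.ofBijective _ (hfib q)).symm ⟨b, hb⟩).2.2

lemma liftE_onE {G B : OrGraph} (π : GraphFib G B) (hfib : π.IsFib)
    (q : G.V) (b : B.E) (hb : B.src b = π.onV q) :
    π.onE (liftE π hfib q b hb) = b :=
  congrArg Subtype.val ((Equiv.ofBijective _ (hfib q)).apply_symm_apply ⟨b, hb⟩)

lemma liftE_unique {G B : OrGraph} (π : GraphFib G B) (hfib : π.IsFib)
    (q : G.V) (b : B.E) (hb : B.src b = π.onV q)
    (e : G.E) (h1 : G.src e = q) (h2 : ¬ π.Vertical e) (h3 : π.onE e = b) :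
    e = liftE π hfib q b hb := by
  have key : (⟨e, h1, h2⟩ : {e : G.E // G.src e = q ∧ ¬ π.Vertical e}) =
      (Equiv.ofBijective _ (hfib q)).symm ⟨b, hb⟩ := by
    rw [Equiv.eq_symm_apply]
    exact (Subtype.ext h3.symm : (⟨b, hb⟩ : {f : B.E // B.src f = π.onV q}) = _).symm
  exact congrArg Subtype.val key

/-- The connection on the total graph adapted to a signed connection on the base:
vertical edges are transported via the original connection, horizontal edges via
(lifts of) the base connection. -/
noncomputable def Ct {G B : OrGraph} (π : GraphFib G B) (hfib : π.IsFib)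
    (C : Connection G) (CB' : Connection B) : G.E → G.E → G.E :=
  fun e f =>
    if hsrc : G.src f = G.src e then
      if hf : π.Vertical f then C.t e f
      else if he : π.Vertical e then
        liftE π hfib (G.dst e) (π.onE f)
          (by rw [π.src_onE f hf, hsrc, he])
      else
        liftE π hfib (G.dst e) (CB'.t (π.onE e) (π.onE f))
          (by
            rw [CB'.src_t (π.onE e) (π.onE f)
              (by rw [π.src_onE f hf, π.src_onE e he, hsrc])]
            exact π.dst_onE e he)
    else f

section CtLemmas

variable {G B : OrGraph} {π : GraphFib G B} (hfib : π.IsFib)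
  (C : Connection G) (CB' : Connection B)

lemma Ct_vert {e f : G.E} (hsrc : G.src f = G.src e) (hf : π.Vertical f) :
    Ct π hfib C CB' e f = C.t e f := by
  unfold Ct; rw [dif_pos hsrc, dif_pos hf]

lemma Ct_horiz_vert {e f : G.E} (hsrc : G.src f = G.src e) (hf : ¬ π.Vertical f)
    (he : π.Vertical e) :
    Ct π hfib C CB' e f = liftE π hfib (G.dst e) (π.onE f)
      (by rw [π.src_onE f hf, hsrc, he]) := by
  unfold Ct; rw [dif_pos hsrc, dif_neg hf, dif_pos he]

lemma Ct_horiz_horiz {e f : G.E} (hsrc : G.src f = G.src e) (hf : ¬ π.Vertical f)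
    (he : ¬ π.Vertical e) :
    Ct π hfib C CB' e f = liftE π hfib (G.dst e) (CB'.t (π.onE e) (π.onE f))
      (by
        rw [CB'.src_t (π.onE e) (π.onE f)
          (by rw [π.src_onE f hf, π.src_onE e he, hsrc])]
        exact π.dst_onE e he) := by
  unfold Ct; rw [dif_pos hsrc, dif_neg hf, dif_neg he]

end CtLemmas

/-- a signed fibration of signed GKM graphs gives rise to a fiberwise
signed fibration of the underlying unsigned GKM graphs; conversely, a fiberwise
signed fibration together with a compatible signed structure on the base determines
a unique signed structure on the total graph extending the fiber lift and making
the fibration a signed fibration. -/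
theorem statement0 (m : ℕ) :
    (∀ (G B : OrGraph) (nG nB : ℕ) (sG : G.E → Zm m) (sB : B.E → Zm m)
        (π : GraphFib G B),
        IsSignedGKM G nG sG → IsSignedGKM B nB sB →
        IsSignedGKMFib sG sB π →
        IsGKM G nG (fun e => pm (sG e)) ∧ IsGKM B nB (fun e => pm (sB e)) ∧
          IsFiberwiseSigned (fun e => pm (sG e)) (fun e => pm (sB e)) π sG) ∧
    (∀ (G B : OrGraph) (nG nB : ℕ) (aG : G.E → ZmPM m) (aB : B.E → ZmPM m)
        (π : GraphFib G B) (ft : G.E → Zm m),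
        IsGKM G nG aG → IsGKM B nB aB →
        IsFiberwiseSigned aG aB π ft →
        ∀ sB : B.E → Zm m, (∀ e, pm (sB e) = aB e) →
          (∃ CB : Connection B, SignedCompat B sB CB) →
          ∃! sG : G.E → Zm m,
            (∀ e, π.Vertical e → sG e = ft e) ∧ (∀ e, pm (sG e) = aG e) ∧
              IsSignedGKMFib sG sB π) := by
  constructor
  · -- Part 1: a signed fibration induces a fiberwise signed fibration.
    intro G B nG nB sG sB π hG hB hfib
    obtain ⟨regG, connG, CG0, hCG0⟩ := hG
    obtain ⟨regB, connB, CB0, hCB0⟩ := hB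
    obtain ⟨hIsFib, C, CB, hSCG, hSCB, hcomp⟩ := hfib
    refine ⟨⟨regG, connG, CG0, unsigned_of_signed hCG0⟩,
      ⟨regB, connB, CB0, unsigned_of_signed hCB0⟩, ?_⟩
    refine ⟨hIsFib, fun e _ => rfl, fun e _ => hSCG.2.2 e, C, CB,
      unsigned_of_signed hSCG, unsigned_of_signed hSCB,
      ⟨fun e he => congrArg pm (hcomp.1 e he), hcomp.2.1, hcomp.2.2⟩, ?_⟩
    intro e f hsrc hf
    obtain ⟨c, hc⟩ := hSCG.2.1 e f hsrc
    exact ⟨sG e, c, rfl, hc⟩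
  · -- Part 2: lifting a signed structure from the base.
    intro G B nG nB aG aB π ft hG hB hFS sB hsB hCBex
    obtain ⟨CB', hCB'⟩ := hCBex
    obtain ⟨hfib, hftpm, hftrev, C, CB, hUG, hUB, hFC, hcong⟩ := hFS
    obtain ⟨hlab, hvert, hhor⟩ := hFC
    -- The candidate signed structure.
    set sG0 : G.E → Zm m := fun e => if π.Vertical e then ft e else sB (π.onE e)
      with hsG0def
    have hsG0v : ∀ e, π.Vertical e → sG0 e = ft e := fun e he => if_pos he
    have hsG0h : ∀ e, ¬ π.Vertical e → sG0 e = sB (π.onE e) := fun e he => if_neg he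
    have hpm : ∀ e, pm (sG0 e) = aG e := by
      intro e
      by_cases he : π.Vertical e
      · rw [hsG0v e he]; exact hftpm e he
      · rw [hsG0h e he, hsB, hlab e he]
    -- The adapted connection.
    have src_t0 : ∀ e f, G.src f = G.src e → G.src (Ct π hfib C CB' e f) = G.dst e := by
      intro e f hsrc
      by_cases hf : π.Vertical f
      · rw [Ct_vert hfib C CB' hsrc hf]; exact C.src_t e f hsrc
      · by_cases he : π.Vertical e
        · rw [Ct_horiz_vert hfib C CB' hsrc hf he]; exact liftE_src _ _ _ _ _
        · rw [Ct_horiz_horiz hfib C CB' hsrc hf he]; exact liftE_src _ _ _ _ _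
    have t_self0 : ∀ e, Ct π hfib C CB' e e = G.rev e := by
      intro e
      by_cases he : π.Vertical e
      · rw [Ct_vert hfib C CB' rfl he]; exact C.t_self e
      · rw [Ct_horiz_horiz hfib C CB' rfl he he]
        refine (liftE_unique π hfib _ _ _ (G.rev e) (G.src_rev e)
          (fun hv => he ((vertical_rev_iff π e).mp hv)) ?_).symm
        rw [π.rev_onE e he, CB'.t_self]
    have t_inv0 : ∀ e f, G.src f = G.src e →
        Ct π hfib C CB' (G.rev e) (Ct π hfib C CB' e f) = f := by
      intro e f hsrc
      have hsrc2 : G.src (Ct π hfib C CB' e f) = G.src (G.rev e) := by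
        rw [G.src_rev]; exact src_t0 e f hsrc
      by_cases hf : π.Vertical f
      · have h2 : π.Vertical (C.t e f) := hvert e f hsrc hf
        rw [Ct_vert hfib C CB' hsrc hf] at hsrc2 ⊢
        rw [Ct_vert hfib C CB' hsrc2 h2]
        exact C.t_inv e f hsrc
      · by_cases he : π.Vertical e
        · have hre : π.Vertical (G.rev e) := (vertical_rev_iff π e).mpr he
          rw [Ct_horiz_vert hfib C CB' hsrc hf he] at hsrc2 ⊢
          rw [Ct_horiz_vert hfib C CB' hsrc2 (liftE_nvert _ _ _ _ _) hre]
          refine (liftE_unique π hfib _ _ _ f (by rw [G.dst_rev]; exact hsrc) hf ?_).symm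
          rw [liftE_onE]
        · have hre : ¬ π.Vertical (G.rev e) := fun hv => he ((vertical_rev_iff π e).mp hv)
          rw [Ct_horiz_horiz hfib C CB' hsrc hf he] at hsrc2 ⊢
          rw [Ct_horiz_horiz hfib C CB' hsrc2 (liftE_nvert _ _ _ _ _) hre]
          refine (liftE_unique π hfib _ _ _ f (by rw [G.dst_rev]; exact hsrc) hf ?_).symm
          rw [liftE_onE, π.rev_onE e he]
          exact (CB'.t_inv (π.onE e) (π.onE f)
            (by rw [π.src_onE f hf, π.src_onE e he, hsrc])).symm
    set C0 : Connection G := ⟨Ct π hfib C CB', src_t0, t_self0, t_inv0⟩ with hC0def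
    -- Signed compatibility of the adapted connection.
    have hconn2 : ∀ e f, G.src f = G.src e →
        ∃ c : ℤ, sG0 (Ct π hfib C CB' e f) = sG0 f + c • sG0 e := by
      intro e f hsrc
      by_cases hf : π.Vertical f
      · have h2 : π.Vertical (C.t e f) := hvert e f hsrc hf
        obtain ⟨g, c, hg, hc⟩ := hcong e f hsrc hf
        have hg' : g = sG0 e ∨ g = -(sG0 e) := pm_eq_iff.mp (hg.trans (hpm e).symm)
        rw [Ct_vert hfib C CB' hsrc hf, hsG0v _ h2, hsG0v f hf]
        rcases hg' with hg' | hg'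
        · exact ⟨c, by rw [hc, hg']⟩
        · exact ⟨-c, by rw [hc, hg', smul_neg, neg_smul]⟩
      · by_cases he : π.Vertical e
        · refine ⟨0, ?_⟩
          rw [Ct_horiz_vert hfib C CB' hsrc hf he,
            hsG0h _ (liftE_nvert _ _ _ _ _), liftE_onE, hsG0h f hf]
          simp
        · obtain ⟨c, hc⟩ := hCB'.2.1 (π.onE e) (π.onE f)
            (by rw [π.src_onE f hf, π.src_onE e he, hsrc])
          refine ⟨c, ?_⟩
          rw [Ct_horiz_horiz hfib C CB' hsrc hf he,
            hsG0h _ (liftE_nvert _ _ _ _ _), liftE_onE, hc,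
            hsG0h f hf, hsG0h e he]
    have hrev0 : ∀ e, sG0 (G.rev e) = - sG0 e := by
      intro e
      by_cases he : π.Vertical e
      · rw [hsG0v _ ((vertical_rev_iff π e).mpr he), hsG0v e he]
        exact hftrev e he
      · rw [hsG0h _ (fun hv => he ((vertical_rev_iff π e).mp hv)),
          hsG0h e he, π.rev_onE e he]
        exact hCB'.2.2 (π.onE e)
    have hind0 : ∀ e f : G.E, G.src f = G.src e → e ≠ f → Indep (sG0 e) (sG0 f) :=
      fun e f hsrc hne => hUG.1 e f hsrc hne _ _ (hpm e) (hpm f)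
    have hvert2 : ∀ e f, G.src f = G.src e → π.Vertical f →
        π.Vertical (Ct π hfib C CB' e f) := by
      intro e f hsrc hf
      rw [Ct_vert hfib C CB' hsrc hf]
      exact hvert e f hsrc hf
    have hhor2 : ∀ e f, G.src f = G.src e → ¬ π.Vertical e → ¬ π.Vertical f →
        ¬ π.Vertical (Ct π hfib C CB' e f) ∧
          π.onE (Ct π hfib C CB' e f) = CB'.t (π.onE e) (π.onE f) := by
      intro e f hsrc he hf
      rw [Ct_horiz_horiz hfib C CB' hsrc hf he]
      exact ⟨liftE_nvert _ _ _ _ _, liftE_onE _ _ _ _ _⟩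
    refine ⟨sG0, ⟨hsG0v, hpm, hfib, C0, CB', ⟨hind0, hconn2, hrev0⟩, hCB',
      hsG0h, hvert2, hhor2⟩, ?_⟩
    -- Uniqueness.
    intro y hy
    obtain ⟨hy1, hy2, hy3⟩ := hy
    funext e
    by_cases he : π.Vertical e
    · rw [hy1 e he, hsG0v e he]
    · obtain ⟨_, Cy, CBy, _, _, hcy⟩ := hy3
      rw [hcy.1 e he, hsG0h e he]

end GKMPaper
end

section
/- In the dimension-6 setting, let (π, α̃) be a fiberwise signed fibration and choose orientations of the fiber edges over the vertices v_i compatibly with a connection, so that the fiber weights α_i ∈ ℤ² satisfy α_i ≡ α_{i+1} mod γ_i for all i ∈ ℤ. Writing α_i = k_i γ_{i−1} + l_i γ_i with the unique integers k_i, l_i in the basis (γ_{i−1}, γ_i) of ℤ², one has l_i = −k_{i−1} for all i, i.e. α_i = k_i γ_{i−1} − k_{i−1} γ_i; moreover all the integers k_i are nonzero. -/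
open Classical

namespace GKMPaper

lemma per_apply {X : Type} (f : ℤ → X) (N : ℤ) (hf : ∀ i, f (i + N) = f i) :
    ∀ (m i : ℤ), f (i + m * N) = f i := by
  intro m
  induction m using Int.induction_on with
  | zero => intro i; simp
  | succ m ih =>
    intro i
    have h1 : i + ((m : ℤ) + 1) * N = (i + m * N) + N := by ring
    rw [h1, hf, ih]
  | pred m ih =>
    intro i
    have h1 : i + (-(m : ℤ) - 1) * N = (i - N) + (-(m : ℤ)) * N := by ring
    rw [h1, ih]
    have h2 := hf (i - N)
    rw [sub_add_cancel] at h2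
    exact h2.symm

lemma indep_of_span_pair (x y : Zm 2)
    (h : Submodule.span ℤ ({x, y} : Set (Zm 2)) = ⊤) : Indep x y := by
  have m0 : (![1, 0] : Zm 2) ∈ Submodule.span ℤ ({x, y} : Set (Zm 2)) := by
    rw [h]; exact Submodule.mem_top
  have m1 : (![0, 1] : Zm 2) ∈ Submodule.span ℤ ({x, y} : Set (Zm 2)) := by
    rw [h]; exact Submodule.mem_top
  obtain ⟨a, b, hab⟩ := Submodule.mem_span_pair.mp m0
  obtain ⟨a', b', hab'⟩ := Submodule.mem_span_pair.mp m1
  have h1 : a * x 0 + b * y 0 = 1 := by simpa using congrFun hab 0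
  have h2 : a * x 1 + b * y 1 = 0 := by simpa using congrFun hab 1
  have h3 : a' * x 0 + b' * y 0 = 0 := by simpa using congrFun hab' 0
  have h4 : a' * x 1 + b' * y 1 = 1 := by simpa using congrFun hab' 1
  have hD : (x 0 * y 1 - x 1 * y 0) * (a * b' - a' * b) = 1 := by
    linear_combination (a' * x 1 + b' * y 1) * h1 - (a' * x 0 + b' * y 0) * h2 + h4
  intro c d hcd
  have hc0 : c * x 0 + d * y 0 = 0 := by simpa using congrFun hcd 0
  have hc1 : c * x 1 + d * y 1 = 0 := by simpa using congrFun hcd 1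
  have hcD : c * (x 0 * y 1 - x 1 * y 0) = 0 := by linear_combination y 1 * hc0 - y 0 * hc1
  have hdD : d * (x 0 * y 1 - x 1 * y 0) = 0 := by linear_combination x 0 * hc1 - x 1 * hc0
  constructor
  · linear_combination (a * b' - a' * b) * hcD - c * hD
  · linear_combination (a * b' - a' * b) * hdD - d * hD

/-- in the dimension-6 setting, with fiber orientations chosen
compatibly with a connection so that `α_i ≡ α_{i+1} mod γ_i`, expanding
`α_i = k_i γ_{i-1} + l_i γ_i` in the basis `(γ_{i-1}, γ_i)` one has `l_i = -k_{i-1}`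
for all `i`, and all `k_i` are nonzero. -/
theorem statement2 (n : ℕ) (hn : 1 ≤ n)
    (B : OrGraph) (aB : B.E → ZmPM 2) (hB : IsGKM B 2 aB) (hBeff : Effective B aB)
    (G : OrGraph) (aG : G.E → ZmPM 2) (hG : IsGKM G 3 aG)
    (π : GraphFib G B) (ft : G.E → Zm 2)
    (hfs : IsFiberwiseSigned aG aB π ft)
    (D : ZGonData B n) (Γd : GammaData aB D)
    (gE : ℤ → G.E) (αf : ℤ → Zm 2)
    (hgv : ∀ i, π.Vertical (gE i))
    (hgo : ∀ i, π.onV (G.src (gE i)) = D.v i)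
    (hgper : ∀ i, gE (i + n) = gE i ∨ gE (i + n) = G.rev (gE i))
    (hαf : ∀ i, pm (αf i) = aG (gE i))
    (hchain : ∀ i, ∃ c : ℤ, αf (i + 1) = αf i + c • Γd.γ i)
    (k l : ℤ → ℤ) (hkl : ∀ i, αf i = k i • Γd.γ (i - 1) + l i • Γd.γ i) :
    (∀ i, l i = - k (i - 1)) ∧ (∀ i, k i ≠ 0) := by
  obtain ⟨hregB, hconnB, CB0, hucB0⟩ := hB
  obtain ⟨hfib, hftl, hftr, C, CB, ucG, ucB2, fibc, hcng⟩ := hfs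
  have hnpos : (0 : ℤ) < (n : ℤ) := by exact_mod_cast hn
  have hnz : (n : ℤ) ≠ 0 := ne_of_gt hnpos
  -- periodicity
  have hper : ∀ i j : ℤ, D.v i = D.v j → ∃ m : ℤ, j = i + m * (n : ℤ) := by
    intro i j hv
    have hvi : D.v i = D.v (i % (n : ℤ)) := by
      have h := per_apply D.v (n : ℤ) D.v_per (i / (n : ℤ)) (i % (n : ℤ))
      rw [Int.emod_add_ediv_mul i (n : ℤ)] at h
      exact h
    have hvj : D.v j = D.v (j % (n : ℤ)) := by
      have h := per_apply D.v (n : ℤ) D.v_per (j / (n : ℤ)) (j % (n : ℤ))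
      rw [Int.emod_add_ediv_mul j (n : ℤ)] at h
      exact h
    have heq : i % (n : ℤ) = j % (n : ℤ) :=
      D.v_inj _ _ (Int.emod_nonneg i hnz) (Int.emod_lt_of_pos i hnpos)
        (Int.emod_nonneg j hnz) (Int.emod_lt_of_pos j hnpos)
        (hvi.symm.trans (hv.trans hvj))
    have hi := Int.emod_add_ediv_mul i (n : ℤ)
    have hj := Int.emod_add_ediv_mul j (n : ℤ)
    exact ⟨j / (n : ℤ) - i / (n : ℤ), by linear_combination hj.symm - hi.symm - heq⟩
  have heBc : ∀ i j : ℤ, D.v i = D.v j → D.eB i = D.eB j := by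
    intro i j h
    obtain ⟨m, rfl⟩ := hper i j h
    exact (per_apply D.eB (n : ℤ) D.e_per m i).symm
  have haBrev : ∀ ed, aB (B.rev ed) = aB ed := hucB0.2.2
  -- labels of edges at the vertex v (i+1)
  have hlabel : ∀ (i : ℤ) (f : B.E), B.src f = D.v (i + 1) →
      aB f = pm (Γd.γ i) ∨ aB f = pm (Γd.γ (i + 1)) := by
    intro i f hsrc
    obtain ⟨j, hj | hj⟩ := D.e_cover f
    · right
      have hv : D.v j = D.v (i + 1) := by rw [← D.src_e j, ← hj]; exact hsrc
      rw [hj, heBc j (i + 1) hv]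
      exact (Γd.lift (i + 1)).symm
    · left
      have hv : D.v (j + 1) = D.v (i + 1) := by
        rw [← D.dst_e j, ← B.src_rev, ← hj]; exact hsrc
      obtain ⟨m, hm⟩ := hper (j + 1) (i + 1) hv
      have hji : D.eB j = D.eB i := by
        have hi' : i = j + m * (n : ℤ) := by linarith
        rw [hi']
        exact (per_apply D.eB (n : ℤ) D.e_per m j).symm
      rw [hj, haBrev, hji]
      exact (Γd.lift i).symm
  -- span of consecutive labels
  have hspanpair : ∀ i : ℤ,
      Submodule.span ℤ ({Γd.γ i, Γd.γ (i + 1)} : Set (Zm 2)) = ⊤ := by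
    intro i
    obtain ⟨lift, hl, hsp⟩ := hBeff (D.v (i + 1))
    have hmem1 : Γd.γ i ∈ Submodule.span ℤ ({Γd.γ i, Γd.γ (i + 1)} : Set (Zm 2)) :=
      Submodule.subset_span (by simp)
    have hmem2 : Γd.γ (i + 1) ∈ Submodule.span ℤ ({Γd.γ i, Γd.γ (i + 1)} : Set (Zm 2)) :=
      Submodule.subset_span (by simp)
    have hsub : Set.range lift ⊆
        (Submodule.span ℤ ({Γd.γ i, Γd.γ (i + 1)} : Set (Zm 2)) : Set (Zm 2)) := by
      rintro _ ⟨e, rfl⟩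
      rcases hlabel i e.1 e.2 with h | h
      · have hpm : pm (lift e) = pm (Γd.γ i) := (hl e).trans h
        rcases Quotient.exact hpm with h' | h'
        · rw [h']; exact hmem1
        · rw [h']; exact Submodule.neg_mem _ hmem1
      · have hpm : pm (lift e) = pm (Γd.γ (i + 1)) := (hl e).trans h
        rcases Quotient.exact hpm with h' | h'
        · rw [h']; exact hmem2
        · rw [h']; exact Submodule.neg_mem _ hmem2
    have hle : (⊤ : Submodule ℤ (Zm 2)) ≤
        Submodule.span ℤ ({Γd.γ i, Γd.γ (i + 1)} : Set (Zm 2)) := by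
      rw [← hsp]
      exact Submodule.span_le.mpr hsub
    exact top_le_iff.mp hle
  have hindep : ∀ i : ℤ, Indep (Γd.γ i) (Γd.γ (i + 1)) :=
    fun i => indep_of_span_pair _ _ (hspanpair i)
  -- independence of the fiber weight and γ i
  have hindf : ∀ i : ℤ, Indep (αf i) (Γd.γ i) := by
    intro i
    have hb : B.src (D.eB i) = π.onV (G.src (gE i)) := by rw [hgo i, D.src_e]
    obtain ⟨⟨hz, hzsrc, hznv⟩, hze⟩ := (hfib (G.src (gE i))).2 ⟨D.eB i, hb⟩
    have hze' : π.onE hz = D.eB i := congrArg Subtype.val hze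
    have hne : gE i ≠ hz := fun h => hznv (h ▸ hgv i)
    have hlab : pm (Γd.γ i) = aG hz := by
      rw [fibc.1 hz hznv, hze']
      exact Γd.lift i
    exact ucG.1 (gE i) hz hzsrc hne (αf i) (Γd.γ i) (hαf i) hlab
  have hk : ∀ i, k i ≠ 0 := by
    intro i h
    have h0 : (1 : ℤ) • αf i + (-(l i)) • Γd.γ i = 0 := by
      rw [hkl i, h, zero_smul, zero_add, one_smul, neg_smul]
      exact add_neg_cancel _
    exact one_ne_zero ((hindf i 1 (-(l i)) h0).1)
  have hlrel : ∀ j : ℤ, l (j + 1) = - k j := by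
    intro j
    obtain ⟨c, hc⟩ := hchain j
    obtain ⟨c', hc'⟩ := Γd.cong (j - 1)
    rw [show j - 1 + 2 = j + 1 from by ring, show j - 1 + 1 = j from by ring] at hc'
    have e2 := hkl (j + 1)
    rw [show j + 1 - 1 = j from by ring] at e2
    have e3 := hkl j
    have key : (k (j + 1) - (k j * c' + l j + c)) • Γd.γ j
        + (l (j + 1) + k j) • Γd.γ (j + 1) = 0 := by
      funext t
      have t1 := congrFun hc t
      have t2 := congrFun e2 t
      have t3 := congrFun e3 t
      have t4 := congrFun hc' t
      simp only [Pi.add_apply, Pi.smul_apply, Pi.zero_apply, smul_eq_mul] at t1 t2 t3 t4 ⊢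
      linear_combination t1 - t2 + t3 + (k j) * t4
    have h0 := (hindep j _ _ key).2
    linarith
  refine ⟨fun i => ?_, hk⟩
  have := hlrel (i - 1)
  rw [show i - 1 + 1 = i from by ring] at this
  exact this


end GKMPaper
end

section
/- In the Section 7 setting, let p be an interior vertex of Γ, let e and e' be the two oriented basic edges emanating from p, let q be the endpoint of e', and let e_F be the fiber edge emanating from q. Then there is no 2-valent GKM subgraph of Γ that contains e, e' and e_F. -/
open Classical

namespace GKMPaper

/-! ### Auxiliary infrastructure for Statement 7 -/

section Aux

lemma dstRev (G : OrGraph) (ed : G.E) : G.dst (G.rev ed) = G.src ed := by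
  have h := G.src_rev (G.rev ed); rw [G.rev_rev] at h; exact h.symm

lemma vertRev {G B : OrGraph} (π : GraphFib G B) (ed : G.E) :
    π.Vertical (G.rev ed) ↔ π.Vertical ed := by
  unfold GraphFib.Vertical
  rw [G.src_rev, dstRev]; exact eq_comm

/-- Integer determinant of two vectors in `ℤ²`. -/
def detZ (a b : Zm 2) : ℤ := a 0 * b 1 - a 1 * b 0

lemma four_le_card {β : Type} [Fintype β] {a b c d : β} (h1 : a ≠ b) (h2 : a ≠ c)
    (h3 : a ≠ d) (h4 : b ≠ c) (h5 : b ≠ d) (h6 : c ≠ d) : 4 ≤ Fintype.card β := by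
  have hinj : Function.Injective ![a, b, c, d] := by
    intro i j hij; fin_cases i <;> fin_cases j <;> simp_all
  simpa using Fintype.card_le_of_injective _ hinj

lemma sm_re (r : ℝ) (z : ℂ) : (r • z).re = r * z.re := by
  rw [Complex.real_smul, Complex.mul_re, Complex.ofReal_re, Complex.ofReal_im]; ring

lemma sm_im (r : ℝ) (z : ℂ) : (r • z).im = r * z.im := by
  rw [Complex.real_smul, Complex.mul_im, Complex.ofReal_re, Complex.ofReal_im]; ring

lemma toC_re (a : Zm 2) : (toC a).re = (a 0 : ℝ) := by
  simp [toC]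

lemma toC_im (a : Zm 2) : (toC a).im = (a 1 : ℝ) := by
  simp [toC]

lemma cross_toC (a b : Zm 2) : cross (toC a) (toC b) = ((detZ a b : ℤ) : ℝ) := by
  unfold cross; rw [toC_re, toC_im, toC_re, toC_im]; push_cast [detZ]; ring

lemma toC_neg (a : Zm 2) : toC (-a) = - toC a := by
  apply Complex.ext
  · rw [toC_re, Complex.neg_re, toC_re]; push_cast [Pi.neg_apply]; ring
  · rw [toC_im, Complex.neg_im, toC_im]; push_cast [Pi.neg_apply]; ring

lemma toC_comb (k l : ℤ) (x y : Zm 2) :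
    toC (k • x - l • y) = (k : ℝ) • toC x - (l : ℝ) • toC y := by
  apply Complex.ext
  · rw [toC_re, Complex.sub_re, sm_re, sm_re, toC_re, toC_re]
    push_cast [Pi.sub_apply, Pi.smul_apply, smul_eq_mul]; ring
  · rw [toC_im, Complex.sub_im, sm_im, sm_im, toC_im, toC_im]
    push_cast [Pi.sub_apply, Pi.smul_apply, smul_eq_mul]; ring

lemma cross_comb_left (r s : ℝ) (X Y : ℂ) : cross (r • X - s • Y) Y = r * cross X Y := by
  simp [cross, Complex.sub_re, Complex.sub_im, sm_re, sm_im]; ring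

lemma cross_comb_right (r s : ℝ) (X Y : ℂ) :
    cross X (r • X - s • Y) = -(s * cross X Y) := by
  simp [cross, Complex.sub_re, Complex.sub_im, sm_re, sm_im]; ring

/-- The key convexity lemma: if the cone spanned by `Y`, `-X`, `F` is all of `ℝ²`,
then `F` points into the open cone spanned by `-Y` and `X` reflected, giving sign
information on the coordinates of `F` in the basis `(X, Y)`. -/
lemma cone3 (X Y F : ℂ) (hXY : cross X Y ≠ 0)
    (h : ∀ z : ℂ, ∃ a b c : ℝ, 0 ≤ a ∧ 0 ≤ b ∧ 0 ≤ c ∧ z = a • Y + b • (-X) + c • F) :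
    0 < cross X Y * cross F Y ∧ cross X Y * cross X F < 0 := by
  have hσ2 : 0 < cross X Y * cross X Y := mul_self_pos.mpr hXY
  constructor
  · by_contra hcon
    push_neg at hcon
    obtain ⟨a, b, c, ha, hb, hc, hz⟩ := h X
    have hYz := congrArg (fun z : ℂ => Y.re * z.im - Y.im * z.re) hz
    simp only [Complex.add_re, Complex.add_im, Complex.neg_re, Complex.neg_im,
      sm_re, sm_im] at hYz
    have key : -(cross X Y * cross X Y) =
        b * (cross X Y * cross X Y) + c * (-(cross X Y * cross F Y)) := by
      unfold cross; linear_combination (X.re * Y.im - X.im * Y.re) * hYz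
    have h1 : 0 ≤ b * (cross X Y * cross X Y) := mul_nonneg hb hσ2.le
    have h2 : 0 ≤ c * (-(cross X Y * cross F Y)) :=
      mul_nonneg hc (neg_nonneg.mpr hcon)
    linarith
  · by_contra hcon
    push_neg at hcon
    obtain ⟨a, b, c, ha, hb, hc, hz⟩ := h (-Y)
    have hXz := congrArg (fun z : ℂ => X.re * z.im - X.im * z.re) hz
    simp only [Complex.add_re, Complex.add_im, Complex.neg_re, Complex.neg_im,
      sm_re, sm_im] at hXz
    have key : -(cross X Y * cross X Y) =
        a * (cross X Y * cross X Y) + c * (cross X Y * cross X F) := by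
      unfold cross; linear_combination (X.re * Y.im - X.im * Y.re) * hXz
    have h1 : 0 ≤ a * (cross X Y * cross X Y) := mul_nonneg ha hσ2.le
    have h2 : 0 ≤ c * (cross X Y * cross X F) := mul_nonneg hc hcon
    linarith

/-- Extraction of the coefficient of `y` from a linear relation, using two
unimodular determinant facts. -/
lemma extractA {σ a b c ε : ℤ} {w x y : Zm 2} (hσ : σ = 1 ∨ σ = -1)
    (h1 : detZ w x = σ) (h2 : detZ x y = σ)
    (hEq : ε • (a • x - b • y) = -w + c • x) : ε * b = -1 := by
  have e0 := congrFun hEq 0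
  have e1 := congrFun hEq 1
  simp only [Pi.add_apply, Pi.neg_apply, Pi.sub_apply, Pi.smul_apply, smul_eq_mul] at e0 e1
  unfold detZ at h1 h2
  have key : (ε * b) * σ = -σ := by
    linear_combination (x 1) * e0 - (x 0) * e1 - (ε * b) * h2 - h1
  rcases hσ with h | h <;> (subst h; omega)

/-- Extraction of the coefficient of `x` from a linear relation, using two
unimodular determinant facts. -/
lemma extractB {σ a b c ε : ℤ} {x y z : Zm 2} (hσ : σ = 1 ∨ σ = -1)
    (h1 : detZ x y = σ) (h2 : detZ y z = σ)
    (hEq : ε • (a • x - b • y) = z - c • y) : ε * a = -1 := by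
  have e0 := congrFun hEq 0
  have e1 := congrFun hEq 1
  simp only [Pi.add_apply, Pi.neg_apply, Pi.sub_apply, Pi.smul_apply, smul_eq_mul] at e0 e1
  unfold detZ at h1 h2
  have key : (ε * a) * σ = -σ := by
    linear_combination (y 1) * e0 - (y 0) * e1 - (ε * a) * h1 - h2
  rcases hσ with h | h <;> (subst h; omega)

end Aux


section Sec7

variable (S : Section7)

lemma n_ne_zero : S.n ≠ 0 := by have := S.hn; omega

lemma two_ne_zero' : (2 : ZMod S.n) ≠ 0 := by
  haveI : NeZero S.n := ⟨n_ne_zero S⟩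
  have : ((2 : ℕ) : ZMod S.n) ≠ 0 := by
    rw [Ne, ZMod.natCast_eq_zero_iff]
    intro h
    have := Nat.le_of_dvd (by norm_num) h
    have := S.hn; omega
  simpa using this

lemma one_ne_zero' : (1 : ZMod S.n) ≠ 0 := by
  haveI : NeZero S.n := ⟨n_ne_zero S⟩
  have : ((1 : ℕ) : ZMod S.n) ≠ 0 := by
    rw [Ne, ZMod.natCast_eq_zero_iff]
    intro h
    have := Nat.le_of_dvd (by norm_num) h
    have := S.hn; omega
  simpa using this

lemma aG_horiz : ∀ ed, ¬ S.π.Vertical ed → S.aG ed = S.aB (S.π.onE ed) := by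
  obtain ⟨-, C, CB, hC, hCB, hcompat⟩ := S.hfib
  exact hcompat.1

lemma aG_rev : ∀ ed, S.aG (S.G.rev ed) = - S.aG ed := by
  obtain ⟨-, C, CB, hC, hCB, hcompat⟩ := S.hfib
  exact hC.2.2

lemma aG_f (i : ZMod S.n) : S.aG (S.f i) = S.aB (S.e i) := by
  rw [aG_horiz S _ (S.f_horiz i), S.f_over]

lemma aG_h (i : ZMod S.n) : S.aG (S.h i) = S.aB (S.e i) := by
  rw [aG_horiz S _ (S.h_horiz i), S.h_over]

/-- The third edge (besides `f i` and `g i`) at the vertex `src (f i)`. -/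
def prevF (i : ZMod S.n) : S.G.E :=
  if i = 0 then S.G.rev (S.h (i - 1)) else S.G.rev (S.f (i - 1))

/-- The third edge (besides `h i` and `rev (g i)`) at the vertex `src (h i)`. -/
def prevH (i : ZMod S.n) : S.G.E :=
  if i = 0 then S.G.rev (S.f (i - 1)) else S.G.rev (S.h (i - 1))

lemma src_prevF (i : ZMod S.n) : S.G.src (prevF S i) = S.G.src (S.f i) := by
  unfold prevF; split
  · next h0 =>
    subst h0
    rw [S.G.src_rev, zero_sub, S.twist_h]
  · next h0 =>
    rw [S.G.src_rev]
    have := S.chain_f (i - 1) (by rwa [sub_add_cancel])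
    rwa [sub_add_cancel] at this

lemma src_prevH (i : ZMod S.n) : S.G.src (prevH S i) = S.G.src (S.h i) := by
  unfold prevH; split
  · next h0 =>
    subst h0
    rw [S.G.src_rev, zero_sub, S.twist_f]
  · next h0 =>
    rw [S.G.src_rev]
    have := S.chain_h (i - 1) (by rwa [sub_add_cancel])
    rwa [sub_add_cancel] at this

lemma horiz_prevF (i : ZMod S.n) : ¬ S.π.Vertical (prevF S i) := by
  unfold prevF; split
  · rw [vertRev]; exact S.h_horiz _
  · rw [vertRev]; exact S.f_horiz _

lemma horiz_prevH (i : ZMod S.n) : ¬ S.π.Vertical (prevH S i) := by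
  unfold prevH; split
  · rw [vertRev]; exact S.f_horiz _
  · rw [vertRev]; exact S.h_horiz _

lemma aG_prevF (i : ZMod S.n) : S.aG (prevF S i) = - S.aB (S.e (i - 1)) := by
  unfold prevF; split
  · rw [aG_rev, aG_h]
  · rw [aG_rev, aG_f]

lemma aG_prevH (i : ZMod S.n) : S.aG (prevH S i) = - S.aB (S.e (i - 1)) := by
  unfold prevH; split
  · rw [aG_rev, aG_f]
  · rw [aG_rev, aG_h]

lemma onE_prevF (i : ZMod S.n) : S.π.onE (prevF S i) = S.B.rev (S.e (i - 1)) := by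
  unfold prevF; split
  · rw [S.π.rev_onE _ (S.h_horiz _), S.h_over]
  · rw [S.π.rev_onE _ (S.f_horiz _), S.f_over]

lemma onE_prevH (i : ZMod S.n) : S.π.onE (prevH S i) = S.B.rev (S.e (i - 1)) := by
  unfold prevH; split
  · rw [S.π.rev_onE _ (S.f_horiz _), S.f_over]
  · rw [S.π.rev_onE _ (S.h_horiz _), S.h_over]

lemma e_ne_rev_e (i : ZMod S.n) : S.e i ≠ S.B.rev (S.e (i - 1)) := by
  intro hcontra
  have hd : S.B.dst (S.e i) = S.B.dst (S.B.rev (S.e (i - 1))) := by rw [hcontra]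
  rw [S.dst_e, dstRev, S.src_e] at hd
  have := S.v_bij.injective hd
  apply two_ne_zero' S
  linear_combination this

lemma f_ne_prevF (i : ZMod S.n) : S.f i ≠ prevF S i := by
  intro hcontra
  apply e_ne_rev_e S i
  rw [← S.f_over i, hcontra, onE_prevF]

lemma h_ne_prevH (i : ZMod S.n) : S.h i ≠ prevH S i := by
  intro hcontra
  apply e_ne_rev_e S i
  rw [← S.h_over i, hcontra, onE_prevH]

lemma f_ne_g (i : ZMod S.n) : S.f i ≠ S.g i := by
  intro hcontra
  exact S.f_horiz i (hcontra ▸ S.g_vert i)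

lemma g_ne_prevF (i : ZMod S.n) : S.g i ≠ prevF S i := by
  intro hcontra
  exact horiz_prevF S i (hcontra ▸ S.g_vert i)

lemma h_ne_revg (i : ZMod S.n) : S.h i ≠ S.G.rev (S.g i) := by
  intro hcontra
  exact S.h_horiz i (hcontra ▸ (vertRev S.π (S.g i)).mpr (S.g_vert i))

lemma revg_ne_prevH (i : ZMod S.n) : S.G.rev (S.g i) ≠ prevH S i := by
  intro hcontra
  exact horiz_prevH S i (hcontra ▸ (vertRev S.π (S.g i)).mpr (S.g_vert i))

lemma edges_at_f (i : ZMod S.n) (ed : S.G.E) (hsrc : S.G.src ed = S.G.src (S.f i)) :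
    ed = S.f i ∨ ed = S.g i ∨ ed = prevF S i := by
  by_contra hni
  push_neg at hni
  obtain ⟨hn1, hn2, hn3⟩ := hni
  have hcard := S.hG.1 (S.G.src (S.f i))
  have h4 : 4 ≤ Fintype.card {ed : S.G.E // S.G.src ed = S.G.src (S.f i)} := by
    refine four_le_card (a := ⟨S.f i, rfl⟩) (b := ⟨S.g i, S.g_src i⟩)
      (c := ⟨prevF S i, src_prevF S i⟩) (d := ⟨ed, hsrc⟩) ?_ ?_ ?_ ?_ ?_ ?_ <;>
      simp only [ne_eq, Subtype.mk.injEq]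
    · exact f_ne_g S i
    · exact f_ne_prevF S i
    · exact fun h => hn1 h.symm
    · exact g_ne_prevF S i
    · exact fun h => hn2 h.symm
    · exact fun h => hn3 h.symm
  omega

lemma edges_at_h (i : ZMod S.n) (ed : S.G.E) (hsrc : S.G.src ed = S.G.src (S.h i)) :
    ed = S.h i ∨ ed = S.G.rev (S.g i) ∨ ed = prevH S i := by
  by_contra hni
  push_neg at hni
  obtain ⟨hn1, hn2, hn3⟩ := hni
  have hcard := S.hG.1 (S.G.src (S.h i))
  have h4 : 4 ≤ Fintype.card {ed : S.G.E // S.G.src ed = S.G.src (S.h i)} := by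
    refine four_le_card (a := ⟨S.h i, rfl⟩)
      (b := ⟨S.G.rev (S.g i), by rw [S.G.src_rev, S.g_dst]⟩)
      (c := ⟨prevH S i, src_prevH S i⟩) (d := ⟨ed, hsrc⟩) ?_ ?_ ?_ ?_ ?_ ?_ <;>
      simp only [ne_eq, Subtype.mk.injEq]
    · exact h_ne_revg S i
    · exact h_ne_prevH S i
    · exact fun h => hn1 h.symm
    · exact revg_ne_prevH S i
    · exact fun h => hn2 h.symm
    · exact fun h => hn3 h.symm
  omega

lemma vertical_at_f (i : ZMod S.n) (ed : S.G.E) (hsrc : S.G.src ed = S.G.src (S.f i))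
    (hv : S.π.Vertical ed) : ed = S.g i := by
  rcases edges_at_f S i ed hsrc with h | h | h
  · exact absurd (h ▸ hv) (S.f_horiz i)
  · exact h
  · exact absurd (h ▸ hv) (horiz_prevF S i)

lemma vertical_at_h (i : ZMod S.n) (ed : S.G.E) (hsrc : S.G.src ed = S.G.src (S.h i))
    (hv : S.π.Vertical ed) : ed = S.G.rev (S.g i) := by
  rcases edges_at_h S i ed hsrc with h | h | h
  · exact absurd (h ▸ hv) (S.h_horiz i)
  · exact h
  · exact absurd (h ▸ hv) (horiz_prevH S i)

lemma horizontal_at_f (i : ZMod S.n) (ed : S.G.E) (hsrc : S.G.src ed = S.G.src (S.f i))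
    (hv : ¬ S.π.Vertical ed) : ed = S.f i ∨ ed = prevF S i := by
  rcases edges_at_f S i ed hsrc with h | h | h
  · exact Or.inl h
  · exact absurd (h ▸ S.g_vert i) hv
  · exact Or.inr h

lemma horizontal_at_h (i : ZMod S.n) (ed : S.G.E) (hsrc : S.G.src ed = S.G.src (S.h i))
    (hv : ¬ S.π.Vertical ed) : ed = S.h i ∨ ed = prevH S i := by
  rcases edges_at_h S i ed hsrc with h | h | h
  · exact Or.inl h
  · exfalso; apply hv; rw [h]; exact (vertRev S.π (S.g i)).mpr (S.g_vert i)
  · exact Or.inr h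

lemma vertex_mem (v : S.G.V) : ∃ i, v = S.G.src (S.f i) ∨ v = S.G.src (S.h i) := by
  have hconn := S.hG.2.1 (S.G.src (S.f 0)) v
  induction hconn with
  | refl => exact ⟨0, Or.inl rfl⟩
  | tail hstep hadj ih =>
    obtain ⟨ed, hs, hd⟩ := hadj
    obtain ⟨i, hi | hi⟩ := ih
    · rw [hi] at hs
      rcases edges_at_f S i ed hs with h | h | h
      · subst h
        by_cases h1 : i + 1 = 0
        · have hm : i = -1 := eq_neg_of_add_eq_zero_left h1
          exact ⟨0, Or.inr (by rw [← hd, hm, S.twist_f])⟩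
        · exact ⟨i + 1, Or.inl (by rw [← hd, S.chain_f i h1])⟩
      · subst h
        exact ⟨i, Or.inr (by rw [← hd, S.g_dst])⟩
      · subst h
        unfold prevF at hd
        split at hd
        · exact ⟨i - 1, Or.inr (by rw [← hd, dstRev])⟩
        · exact ⟨i - 1, Or.inl (by rw [← hd, dstRev])⟩
    · rw [hi] at hs
      rcases edges_at_h S i ed hs with h | h | h
      · subst h
        by_cases h1 : i + 1 = 0
        · have hm : i = -1 := eq_neg_of_add_eq_zero_left h1
          exact ⟨0, Or.inl (by rw [← hd, hm, S.twist_h])⟩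
        · exact ⟨i + 1, Or.inr (by rw [← hd, S.chain_h i h1])⟩
      · subst h
        exact ⟨i, Or.inl (by rw [← hd, dstRev, S.g_src])⟩
      · subst h
        unfold prevH at hd
        split at hd
        · exact ⟨i - 1, Or.inl (by rw [← hd, dstRev])⟩
        · exact ⟨i - 1, Or.inr (by rw [← hd, dstRev])⟩

lemma sigma_exists : ∃ σ : ℤ, (σ = 1 ∨ σ = -1) ∧
    ∀ i, detZ (S.aB (S.e (i - 1))) (S.aB (S.e i)) = σ := by
  have hkey : ∀ i : ZMod S.n,
      cross (S.P (i + 1) - S.P i) (S.P (i + 2) - S.P i) =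
        S.tl i * S.tl (i + 1) * ((detZ (S.aB (S.e i)) (S.aB (S.e (i + 1))) : ℤ) : ℝ) := by
    intro i
    have h3 : S.P (i + 2) - S.P i = (S.P (i + 2) - S.P (i + 1)) + (S.P (i + 1) - S.P i) := by
      ring
    have hs1 := S.slope i
    have hs2 := S.slope (i + 1)
    have hadd : i + 1 + 1 = i + 2 := by ring
    rw [hadd] at hs2
    rw [h3, hs1, hs2, ← cross_toC]
    simp only [cross, Complex.add_re, Complex.add_im, sm_re, sm_im]
    ring
  have hne2 : ∀ i : ZMod S.n, i + 2 ≠ i := by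
    intro i hcontra
    exact two_ne_zero' S (by linear_combination hcontra)
  have hne1 : ∀ i : ZMod S.n, i + 2 ≠ i + 1 := by
    intro i hcontra
    exact one_ne_zero' S (by linear_combination hcontra)
  rcases S.polygon with hcx | hcx
  · refine ⟨1, Or.inl rfl, fun i => ?_⟩
    have h := hcx (i - 1) (i - 1 + 2) (hne2 _) (hne1 _)
    rw [hkey] at h
    have hi1 : i - 1 + 1 = i := by ring
    rw [hi1] at h
    have hpos : (0:ℝ) < ((detZ (S.aB (S.e (i - 1))) (S.aB (S.e i)) : ℤ) : ℝ) := by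
      have ht1 := S.tl_pos (i - 1)
      have ht2 := S.tl_pos i
      nlinarith [mul_pos ht1 ht2]
    have hposZ : 0 < detZ (S.aB (S.e (i - 1))) (S.aB (S.e i)) := by exact_mod_cast hpos
    have hdel := S.delzant i
    unfold detZ at hposZ ⊢
    rcases hdel with hdel | hdel <;> omega
  · refine ⟨-1, Or.inr rfl, fun i => ?_⟩
    have h := hcx (i - 1) (i - 1 + 2) (hne2 _) (hne1 _)
    rw [hkey] at h
    have hi1 : i - 1 + 1 = i := by ring
    rw [hi1] at h
    have hneg : ((detZ (S.aB (S.e (i - 1))) (S.aB (S.e i)) : ℤ) : ℝ) < 0 := by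
      have ht1 := S.tl_pos (i - 1)
      have ht2 := S.tl_pos i
      nlinarith [mul_pos ht1 ht2]
    have hnegZ : detZ (S.aB (S.e (i - 1))) (S.aB (S.e i)) < 0 := by exact_mod_cast hneg
    have hdel := S.delzant i
    unfold detZ at hnegZ ⊢
    rcases hdel with hdel | hdel <;> omega

end Sec7


section Interior

variable (S : Section7)

lemma cross_neg_left (X Y : ℂ) : cross (-X) Y = - cross X Y := by
  simp [cross]; ring

lemma cross_neg_right (X Y : ℂ) : cross X (-Y) = - cross X Y := by
  simp [cross]; ring

lemma filter_at_f (m : ZMod S.n) :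
    Finset.univ.filter (fun ed : S.G.E => S.G.src ed = S.G.src (S.f m)) =
      {S.f m, S.g m, prevF S m} := by
  ext ed
  simp only [Finset.mem_filter, Finset.mem_univ, true_and, Finset.mem_insert,
    Finset.mem_singleton]
  constructor
  · exact edges_at_f S m ed
  · rintro (h | h | h) <;> subst h
    · rfl
    · exact S.g_src m
    · exact src_prevF S m

lemma filter_at_h (m : ZMod S.n) :
    Finset.univ.filter (fun ed : S.G.E => S.G.src ed = S.G.src (S.h m)) =
      {S.h m, S.G.rev (S.g m), prevH S m} := by
  ext ed
  simp only [Finset.mem_filter, Finset.mem_univ, true_and, Finset.mem_insert,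
    Finset.mem_singleton]
  constructor
  · exact edges_at_h S m ed
  · rintro (h | h | h) <;> subst h
    · rfl
    · rw [S.G.src_rev, S.g_dst]
    · exact src_prevH S m

lemma interior_f (m : ZMod S.n) (hp : InteriorVtx S.G S.aG (S.G.src (S.f m))) :
    0 < S.k m ∧ 0 < (if m = 0 then - S.k (m - 1) else S.k (m - 1)) := by
  obtain ⟨σ, hσpm, hσall⟩ := sigma_exists S
  have hXY : cross (toC (S.aB (S.e (m - 1)))) (toC (S.aB (S.e m))) = ((σ : ℤ) : ℝ) := by
    rw [cross_toC, hσall m]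
  have hXYne : cross (toC (S.aB (S.e (m - 1)))) (toC (S.aB (S.e m))) ≠ 0 := by
    rw [hXY]; rcases hσpm with h | h <;> simp [h]
  have hcone : ∀ z : ℂ, ∃ a b c : ℝ, 0 ≤ a ∧ 0 ≤ b ∧ 0 ≤ c ∧
      z = a • toC (S.aB (S.e m)) + b • (-(toC (S.aB (S.e (m - 1))))) +
        c • toC (S.aG (S.g m)) := by
    intro z
    obtain ⟨cf, hcf, hsum⟩ := hp z
    refine ⟨cf (S.f m), cf (prevF S m), cf (S.g m), hcf _, hcf _, hcf _, ?_⟩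
    rw [hsum, filter_at_f,
      Finset.sum_insert (by simp [f_ne_g S m, f_ne_prevF S m]),
      Finset.sum_insert (by simp [g_ne_prevF S m]), Finset.sum_singleton,
      aG_f, aG_prevF, toC_neg]
    module
  obtain ⟨hpos1, hpos2⟩ := cone3 _ _ _ hXYne hcone
  have hFc : toC (S.aG (S.g m)) =
      ((S.k m : ℤ) : ℝ) • toC (S.aB (S.e (m - 1))) -
        (((if m = 0 then - S.k (m - 1) else S.k (m - 1)) : ℤ) : ℝ) • toC (S.aB (S.e m)) := by
    rw [S.fiberweight m, toC_comb]
  rw [hFc, cross_comb_left] at hpos1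
  rw [hFc, cross_comb_right] at hpos2
  rw [hXY] at hpos1 hpos2
  constructor
  · have : (0:ℝ) < (S.k m : ℝ) := by
      rcases hσpm with h | h <;> (rw [h] at hpos1; push_cast at hpos1 ⊢; linarith)
    exact_mod_cast this
  · have : (0:ℝ) < (((if m = 0 then - S.k (m - 1) else S.k (m - 1)) : ℤ) : ℝ) := by
      rcases hσpm with h | h <;> (rw [h] at hpos2; push_cast at hpos2 ⊢; linarith)
    exact_mod_cast this

lemma interior_h (m : ZMod S.n) (hp : InteriorVtx S.G S.aG (S.G.src (S.h m))) :
    S.k m < 0 ∧ (if m = 0 then - S.k (m - 1) else S.k (m - 1)) < 0 := by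
  obtain ⟨σ, hσpm, hσall⟩ := sigma_exists S
  have hXY : cross (toC (S.aB (S.e (m - 1)))) (toC (S.aB (S.e m))) = ((σ : ℤ) : ℝ) := by
    rw [cross_toC, hσall m]
  have hXYne : cross (toC (S.aB (S.e (m - 1)))) (toC (S.aB (S.e m))) ≠ 0 := by
    rw [hXY]; rcases hσpm with h | h <;> simp [h]
  have hcone : ∀ z : ℂ, ∃ a b c : ℝ, 0 ≤ a ∧ 0 ≤ b ∧ 0 ≤ c ∧
      z = a • toC (S.aB (S.e m)) + b • (-(toC (S.aB (S.e (m - 1))))) +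
        c • toC (S.aG (S.G.rev (S.g m))) := by
    intro z
    obtain ⟨cf, hcf, hsum⟩ := hp z
    refine ⟨cf (S.h m), cf (prevH S m), cf (S.G.rev (S.g m)), hcf _, hcf _, hcf _, ?_⟩
    rw [hsum, filter_at_h,
      Finset.sum_insert (by simp [h_ne_revg S m, h_ne_prevH S m]),
      Finset.sum_insert (by simp [revg_ne_prevH S m]), Finset.sum_singleton,
      aG_h, aG_prevH, toC_neg]
    module
  obtain ⟨hpos1, hpos2⟩ := cone3 _ _ _ hXYne hcone
  have hFc : toC (S.aG (S.G.rev (S.g m))) =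
      -(((S.k m : ℤ) : ℝ) • toC (S.aB (S.e (m - 1))) -
        (((if m = 0 then - S.k (m - 1) else S.k (m - 1)) : ℤ) : ℝ) • toC (S.aB (S.e m))) := by
    rw [aG_rev, S.fiberweight m, toC_neg, toC_comb]
  rw [hFc, cross_neg_left, cross_comb_left] at hpos1
  rw [hFc, cross_neg_right, cross_comb_right] at hpos2
  rw [hXY] at hpos1 hpos2
  constructor
  · have : (S.k m : ℝ) < 0 := by
      rcases hσpm with h | h <;> (rw [h] at hpos1; push_cast at hpos1 ⊢; linarith)
    exact_mod_cast this
  · have : (((if m = 0 then - S.k (m - 1) else S.k (m - 1)) : ℤ) : ℝ) < 0 := by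
      rcases hσpm with h | h <;> (rw [h] at hpos2; push_cast at hpos2 ⊢; linarith)
    exact_mod_cast this

end Interior

/-- in the Section 7 setting, for an interior vertex `p` with basic
edges `e`, `e'` emanating from `p`, `q` the endpoint of `e'` and `eF` the fiber
edge emanating from `q`, there is no 2-valent GKM subgraph of `Γ` containing
`e`, `e'` and `eF`. -/
theorem statement7 (S : Section7) (p : S.G.V) (hp : InteriorVtx S.G S.aG p)
    (e e' : S.G.E) (he : S.G.src e = p) (he' : S.G.src e' = p) (hee' : e ≠ e')
    (hhe : ¬ S.π.Vertical e) (hhe' : ¬ S.π.Vertical e')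
    (eF : S.G.E) (heF : S.G.src eF = S.G.dst e') (hvF : S.π.Vertical eF) :
    ¬ ∃ Sub : Set S.G.E, IsSigned2ValentSub S.G S.aG Sub ∧
        e ∈ Sub ∧ e' ∈ Sub ∧ eF ∈ Sub := by
  rintro ⟨Sub, hSub, heS, he'S, heFS⟩
  obtain ⟨-, hrev, hcard, -, T, hT1, hT2, hT3, hT4⟩ := hSub
  have hsrc : S.G.src e = S.G.src e' := by rw [he, he']
  have hTmem := hT1 e' e he'S heS hsrc
  have hTne : T e' e ≠ S.G.rev e' := by
    intro hcontra
    have h1 := hT3 e' e he'S heS hsrc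
    rw [hcontra, hT2 (S.G.rev e') (hrev e' he'S), S.G.rev_rev] at h1
    exact hee' h1.symm
  have hFrev : S.G.rev e' ∈ Sub := hrev e' he'S
  have hne2 : eF ≠ S.G.rev e' := by
    intro hcontra
    apply hhe'
    rw [← vertRev S.π e']
    exact hcontra ▸ hvF
  have hTeF : T e' e = eF := by
    by_contra hne3
    have h3 : (3:ℕ) ≤ Nat.card {ed : S.G.E // ed ∈ Sub ∧ S.G.src ed = S.G.dst e'} := by
      have hinj : Function.Injective
          (![⟨eF, heFS, heF⟩, ⟨S.G.rev e', hFrev, by rw [S.G.src_rev]⟩,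
             ⟨T e' e, hTmem.1, hTmem.2⟩] :
            Fin 3 → {ed : S.G.E // ed ∈ Sub ∧ S.G.src ed = S.G.dst e'}) := by
        intro i j hij
        fin_cases i <;> fin_cases j <;>
          simp_all [Subtype.mk.injEq, hne2, hTne, Ne.symm hne3]
      simpa using Nat.card_le_card_of_injective _ hinj
    rw [hcard (S.G.dst e') ⟨eF, heFS, heF⟩] at h3
    omega
  obtain ⟨c, hc⟩ := hT4 e' e he'S heS hsrc
  rw [hTeF] at hc
  -- hc : S.aG eF = S.aG e + c • S.aG e'
  obtain ⟨σ, hσpm, hσall⟩ := sigma_exists S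
  obtain ⟨m, hm | hm⟩ := vertex_mem S p
  · -- p = src (f m)
    rw [hm] at he he'
    have hkm := interior_f S m (hm ▸ hp)
    rcases horizontal_at_f S m e' he' hhe' with he'1 | he'1
    · -- Case A : e' = f m, e = prevF m
      have he1 : e = prevF S m := by
        rcases horizontal_at_f S m e he hhe with h | h
        · exact absurd (h.trans he'1.symm) hee'
        · exact h
      by_cases hm1 : m + 1 = 0
      · -- twist subcase
        have hmm : m = -1 := eq_neg_of_add_eq_zero_left hm1
        have hq : S.G.src eF = S.G.src (S.h 0) := by
          rw [heF, he'1, hmm]; exact S.twist_f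
        have heFg : eF = S.G.rev (S.g 0) := vertical_at_h S 0 eF hq hvF
        rw [heFg, aG_rev, S.fiberweight 0, if_pos rfl, he1, aG_prevF, he'1, aG_f,
          show (0 : ZMod S.n) - 1 = m from by rw [hmm]; ring, ← hm1] at hc
        have hEq : (-1 : ℤ) • (S.k (m + 1) • S.aB (S.e m) -
            (- S.k m) • S.aB (S.e (m + 1))) =
            -S.aB (S.e (m - 1)) + c • S.aB (S.e m) := by
          rw [neg_one_smul]; exact hc
        have hx := extractA hσpm (hσall m)
          (by have := hσall (m + 1); rwa [show m + 1 - 1 = m from by ring] at this) hEq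
        have := hkm.1
        omega
      · have hq : S.G.src eF = S.G.src (S.f (m + 1)) := by
          rw [heF, he'1]; exact S.chain_f m hm1
        have heFg : eF = S.g (m + 1) := vertical_at_f S (m + 1) eF hq hvF
        rw [heFg, S.fiberweight (m + 1), if_neg hm1,
          show m + 1 - 1 = m from by ring, he1, aG_prevF, he'1, aG_f] at hc
        have hEq : (1 : ℤ) • (S.k (m + 1) • S.aB (S.e m) -
            S.k m • S.aB (S.e (m + 1))) =
            -S.aB (S.e (m - 1)) + c • S.aB (S.e m) := by
          rw [one_smul]; exact hc
        have hx := extractA hσpm (hσall m)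
          (by have := hσall (m + 1); rwa [show m + 1 - 1 = m from by ring] at this) hEq
        have := hkm.1
        omega
    · -- Case B : e' = prevF m, e = f m
      have he1 : e = S.f m := by
        rcases horizontal_at_f S m e he hhe with h | h
        · exact h
        · exact absurd (h.trans he'1.symm) hee'
      by_cases hm0 : m = 0
      · -- twist subcase : e' = rev (h (m-1))
        have he'2 : e' = S.G.rev (S.h (m - 1)) := by
          rw [he'1]; unfold prevF; rw [if_pos hm0]
        have hq : S.G.src eF = S.G.src (S.h (m - 1)) := by
          rw [heF, he'2, dstRev]
        have heFg : eF = S.G.rev (S.g (m - 1)) := vertical_at_h S (m - 1) eF hq hvF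
        rw [heFg, aG_rev, S.fiberweight (m - 1), he1, aG_f, he'1, aG_prevF,
          smul_neg, ← sub_eq_add_neg] at hc
        have hEq : (-1 : ℤ) • (S.k (m - 1) • S.aB (S.e (m - 1 - 1)) -
            (if m - 1 = 0 then - S.k (m - 1 - 1) else S.k (m - 1 - 1)) •
              S.aB (S.e (m - 1))) =
            S.aB (S.e m) - c • S.aB (S.e (m - 1)) := by
          rw [neg_one_smul]; exact hc
        have hx := extractB hσpm (hσall (m - 1)) (hσall m) hEq
        have h2 := hkm.2
        rw [if_pos hm0] at h2
        omega
      · have he'2 : e' = S.G.rev (S.f (m - 1)) := by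
          rw [he'1]; unfold prevF; rw [if_neg hm0]
        have hq : S.G.src eF = S.G.src (S.f (m - 1)) := by
          rw [heF, he'2, dstRev]
        have heFg : eF = S.g (m - 1) := vertical_at_f S (m - 1) eF hq hvF
        rw [heFg, S.fiberweight (m - 1), he1, aG_f, he'1, aG_prevF,
          smul_neg, ← sub_eq_add_neg] at hc
        have hEq : (1 : ℤ) • (S.k (m - 1) • S.aB (S.e (m - 1 - 1)) -
            (if m - 1 = 0 then - S.k (m - 1 - 1) else S.k (m - 1 - 1)) •
              S.aB (S.e (m - 1))) =
            S.aB (S.e m) - c • S.aB (S.e (m - 1)) := by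
          rw [one_smul]; exact hc
        have hx := extractB hσpm (hσall (m - 1)) (hσall m) hEq
        have h2 := hkm.2
        rw [if_neg hm0] at h2
        omega
  · -- p = src (h m)
    rw [hm] at he he'
    have hkm := interior_h S m (hm ▸ hp)
    rcases horizontal_at_h S m e' he' hhe' with he'1 | he'1
    · -- Case A : e' = h m, e = prevH m
      have he1 : e = prevH S m := by
        rcases horizontal_at_h S m e he hhe with h | h
        · exact absurd (h.trans he'1.symm) hee'
        · exact h
      by_cases hm1 : m + 1 = 0
      · have hmm : m = -1 := eq_neg_of_add_eq_zero_left hm1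
        have hq : S.G.src eF = S.G.src (S.f 0) := by
          rw [heF, he'1, hmm]; exact S.twist_h
        have heFg : eF = S.g 0 := vertical_at_f S 0 eF hq hvF
        rw [heFg, S.fiberweight 0, if_pos rfl, he1, aG_prevH, he'1, aG_h,
          show (0 : ZMod S.n) - 1 = m from by rw [hmm]; ring, ← hm1] at hc
        have hEq : (1 : ℤ) • (S.k (m + 1) • S.aB (S.e m) -
            (- S.k m) • S.aB (S.e (m + 1))) =
            -S.aB (S.e (m - 1)) + c • S.aB (S.e m) := by
          rw [one_smul]; exact hc
        have hx := extractA hσpm (hσall m)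
          (by have := hσall (m + 1); rwa [show m + 1 - 1 = m from by ring] at this) hEq
        have := hkm.1
        omega
      · have hq : S.G.src eF = S.G.src (S.h (m + 1)) := by
          rw [heF, he'1]; exact S.chain_h m hm1
        have heFg : eF = S.G.rev (S.g (m + 1)) := vertical_at_h S (m + 1) eF hq hvF
        rw [heFg, aG_rev, S.fiberweight (m + 1), if_neg hm1,
          show m + 1 - 1 = m from by ring, he1, aG_prevH, he'1, aG_h] at hc
        have hEq : (-1 : ℤ) • (S.k (m + 1) • S.aB (S.e m) -
            S.k m • S.aB (S.e (m + 1))) =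
            -S.aB (S.e (m - 1)) + c • S.aB (S.e m) := by
          rw [neg_one_smul]; exact hc
        have hx := extractA hσpm (hσall m)
          (by have := hσall (m + 1); rwa [show m + 1 - 1 = m from by ring] at this) hEq
        have := hkm.1
        omega
    · -- Case B : e' = prevH m, e = h m
      have he1 : e = S.h m := by
        rcases horizontal_at_h S m e he hhe with h | h
        · exact h
        · exact absurd (h.trans he'1.symm) hee'
      by_cases hm0 : m = 0
      · have he'2 : e' = S.G.rev (S.f (m - 1)) := by
          rw [he'1]; unfold prevH; rw [if_pos hm0]
        have hq : S.G.src eF = S.G.src (S.f (m - 1)) := by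
          rw [heF, he'2, dstRev]
        have heFg : eF = S.g (m - 1) := vertical_at_f S (m - 1) eF hq hvF
        rw [heFg, S.fiberweight (m - 1), he1, aG_h, he'1, aG_prevH,
          smul_neg, ← sub_eq_add_neg] at hc
        have hEq : (1 : ℤ) • (S.k (m - 1) • S.aB (S.e (m - 1 - 1)) -
            (if m - 1 = 0 then - S.k (m - 1 - 1) else S.k (m - 1 - 1)) •
              S.aB (S.e (m - 1))) =
            S.aB (S.e m) - c • S.aB (S.e (m - 1)) := by
          rw [one_smul]; exact hc
        have hx := extractB hσpm (hσall (m - 1)) (hσall m) hEq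
        have h2 := hkm.2
        rw [if_pos hm0] at h2
        omega
      · have he'2 : e' = S.G.rev (S.h (m - 1)) := by
          rw [he'1]; unfold prevH; rw [if_neg hm0]
        have hq : S.G.src eF = S.G.src (S.h (m - 1)) := by
          rw [heF, he'2, dstRev]
        have heFg : eF = S.G.rev (S.g (m - 1)) := vertical_at_h S (m - 1) eF hq hvF
        rw [heFg, aG_rev, S.fiberweight (m - 1), he1, aG_h, he'1, aG_prevH,
          smul_neg, ← sub_eq_add_neg] at hc
        have hEq : (-1 : ℤ) • (S.k (m - 1) • S.aB (S.e (m - 1 - 1)) -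
            (if m - 1 = 0 then - S.k (m - 1 - 1) else S.k (m - 1 - 1)) •
              S.aB (S.e (m - 1))) =
            S.aB (S.e m) - c • S.aB (S.e (m - 1)) := by
          rw [neg_one_smul]; exact hc
        have hx := extractB hσpm (hσall (m - 1)) (hσall m) hEq
        have h2 := hkm.2
        rw [if_neg hm0] at h2
        omega

end GKMPaper
end
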